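/- Let F be a strongly Lindelöf locally convex Hausdorff topological vector space and N : F → [0,∞] a lower semicontinuous pseudo-seminorm (i.e., N(λx) = |λ|N(x) and N(x+y) ≤ N(x) + N(y)). Then there exists a sequence (xₙ*) of continuous linear functionals on F such that N(x) = sup_{n≥1} |xₙ*(x)| for all x ∈ F. -/

import Mathlib

open scoped ENNReal

/-- a lower semicontinuous pseudo-seminorm on a strongly Lindelöf
locally convex Hausdorff TVS is a countable supremum of absolute values of
continuous linear functionals. -/
theorem stmt9 {F : Type*} [AddCommGroup F] [Module ℝ F] [TopologicalSpace F]
    [IsTopologicalAddGroup F] [ContinuousSMul ℝ F] [T2Space F]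
    [LocallyConvexSpace ℝ F] [HereditarilyLindelofSpace F]
    (N : F → ℝ≥0∞)
    (hhom : ∀ (lam : ℝ) (x : F), N (lam • x) = ENNReal.ofReal |lam| * N x)
    (hsub : ∀ x y : F, N (x + y) ≤ N x + N y)
    (hlsc : LowerSemicontinuous N) :
    ∃ xs : ℕ → (F →L[ℝ] ℝ), ∀ x : F, N x = ⨆ n, ENNReal.ofReal |xs n x| := by
  classical
  -- N 0 = 0
  have hN0 : N 0 = 0 := by
    have := hhom 0 0
    simpa using this
  -- N (-x) = N x
  have hNneg : ∀ x : F, N (-x) = N x := by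
    intro x
    have := hhom (-1) x
    simpa using this
  -- the unit ball of N
  set C : Set F := {y | N y ≤ 1} with hC
  have hCclosed : IsClosed C := hlsc.isClosed_preimage 1
  have hCconvex : Convex ℝ C := by
    intro y hy z hz a b ha hb hab
    have h1 : N (a • y + b • z) ≤ N (a • y) + N (b • z) := hsub _ _
    have h2 : N (a • y) = ENNReal.ofReal a * N y := by
      rw [hhom a y, abs_of_nonneg ha]
    have h3 : N (b • z) = ENNReal.ofReal b * N z := by
      rw [hhom b z, abs_of_nonneg hb]
    have : N (a • y + b • z) ≤ ENNReal.ofReal a * 1 + ENNReal.ofReal b * 1 := by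
      refine h1.trans ?_
      rw [h2, h3]
      exact add_le_add (mul_le_mul_right hy _) (mul_le_mul_right hz _)
    simpa [hC, ← ENNReal.ofReal_add ha hb, hab] using this
  -- the set where a functional is ≤ N
  set S : Set (F →L[ℝ] ℝ) := {f | ∀ y, ENNReal.ofReal (f y) ≤ N y} with hS
  -- key Hahn-Banach step
  have key : ∀ x : F, 1 < N x → ∃ f ∈ S, 1 < f x := by
    intro x hx
    have hxC : x ∉ C := by
      intro h
      exact absurd hx (not_lt.mpr h)
    obtain ⟨f, u, hfu, hux⟩ := geometric_hahn_banach_closed_point hCconvex hCclosed hxC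
    have hu0 : 0 < u := by
      have : f 0 < u := hfu 0 (by simp [hC, hN0])
      simpa using this
    refine ⟨u⁻¹ • f, ?_, ?_⟩
    · -- u⁻¹ • f ≤ N pointwise
      intro y
      by_contra hcon
      push_neg at hcon
      obtain ⟨t, ht0, hNt, htg⟩ := ENNReal.lt_iff_exists_real_btwn.mp hcon
      have htpos : 0 < t := by
        rcases lt_or_eq_of_le ht0 with h | h
        · exact h
        · exfalso; rw [← h] at hNt; simp at hNt
      -- then t⁻¹ • y ∈ C
      have hmem : t⁻¹ • y ∈ C := by
        have h1 : N (t⁻¹ • y) = ENNReal.ofReal t⁻¹ * N y := by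
          rw [hhom t⁻¹ y, abs_of_nonneg (by positivity)]
        have h2 : ENNReal.ofReal t⁻¹ * N y < ENNReal.ofReal t⁻¹ * ENNReal.ofReal t := by
          refine ENNReal.mul_lt_mul_right ?_ ?_ hNt
          · exact (ENNReal.ofReal_pos.mpr (by positivity)).ne'
          · exact ENNReal.ofReal_ne_top
        have h3 : ENNReal.ofReal t⁻¹ * ENNReal.ofReal t = 1 := by
          rw [← ENNReal.ofReal_mul (by positivity)]
          rw [inv_mul_cancel₀ (ne_of_gt htpos)]
          simp
        show N (t⁻¹ • y) ≤ 1
        rw [h1]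
        exact (h2.trans_le h3.le).le
      have hfy : f (t⁻¹ • y) < u := hfu _ hmem
      have : (u⁻¹ • f) y < t := by
        have : t⁻¹ * f y < u := by simpa using hfy
        have h4 : f y < u * t := by
          have := (mul_lt_mul_iff_of_pos_right htpos).mpr this
          calc f y = t⁻¹ * f y * t := by field_simp
          _ < u * t := this
        simp only [ContinuousLinearMap.smul_apply, smul_eq_mul]
        rw [inv_mul_lt_iff₀ hu0]
        linarith [h4]
      -- contradiction with t < (u⁻¹ • f) y from htg
      have : ENNReal.ofReal ((u⁻¹ • f) y) ≤ ENNReal.ofReal t :=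
        ENNReal.ofReal_le_ofReal this.le
      exact absurd htg (not_lt.mpr this)
    · -- 1 < (u⁻¹ • f) x
      simp only [ContinuousLinearMap.smul_apply, smul_eq_mul]
      rw [lt_inv_mul_iff₀ hu0]
      simpa using hux
  -- the open set where N > 1
  set U : Set F := {x | 1 < N x} with hU
  have hUopen : IsOpen U := hlsc.isOpen_preimage 1
  -- choose functionals covering U
  choose g hgS hgx using key
  -- open cover of U by sets where the functionals exceed 1
  have hcover : U ⊆ ⋃ p : U, {y | 1 < g p.1 p.2 y} := by
    intro x hx
    exact Set.mem_iUnion.mpr ⟨⟨x, hx⟩, hgx x hx⟩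
  obtain ⟨r, hrcount, hrcover⟩ :=
    (HereditarilyLindelof_LindelofSets U).elim_countable_subcover
      (fun p : U => {y | 1 < g p.1 p.2 y})
      (fun p => isOpen_lt continuous_const (g p.1 p.2).continuous) hcover
  -- build a countable nonempty family of functionals in S covering U
  set T : Set (F →L[ℝ] ℝ) := insert 0 ((fun p : U => g p.1 p.2) '' r) with hT
  have hTcount : T.Countable := (hrcount.image _).insert 0
  have hTne : T.Nonempty := ⟨0, Set.mem_insert _ _⟩
  obtain ⟨xs, hxs⟩ := (Set.Countable.exists_eq_range hTcount hTne)
  refine ⟨xs, fun x => ?_⟩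
  have hxsS : ∀ n, xs n ∈ S := by
    intro n
    have : xs n ∈ T := hxs ▸ Set.mem_range_self n
    rcases this with h | h
    · rw [h]; intro y; simp
    · obtain ⟨p, _, hp⟩ := h
      rw [← hp]; exact hgS p.1 p.2
  -- key: for x ∈ U, some xs n exceeds 1 at x
  have hUx : ∀ x ∈ U, ∃ n, 1 < xs n x := by
    intro x hx
    have := hrcover hx
    obtain ⟨_, ⟨p, rfl⟩, h2⟩ := this
    simp only [Set.mem_iUnion] at h2
    obtain ⟨hpr, hx1⟩ := h2
    have : g p.1 p.2 ∈ T := Set.mem_insert_of_mem _ ⟨p, hpr, rfl⟩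
    rw [hxs] at this
    obtain ⟨n, hn⟩ := this
    exact ⟨n, by rw [hn]; exact hx1⟩
  -- prove the equality
  apply le_antisymm
  · -- N x ≤ sup
    refine ENNReal.le_of_forall_nnreal_lt fun q hq => ?_
    rcases eq_or_ne q 0 with rfl | hq0
    · simp
    have hqpos : (0:ℝ) < q := by positivity
    -- (q:ℝ)⁻¹ • x ∈ U
    have hmem : ((q:ℝ)⁻¹ • x) ∈ U := by
      rw [hU, Set.mem_setOf_eq, hhom, abs_of_nonneg (by positivity)]
      rw [ENNReal.ofReal_inv_of_pos hqpos, ENNReal.ofReal_coe_nnreal]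
      rw [← ENNReal.div_eq_inv_mul]
      exact ENNReal.lt_div_iff_mul_lt (Or.inl (by exact_mod_cast hq0))
        (Or.inl ENNReal.coe_ne_top) |>.mpr (by simpa using hq)
    obtain ⟨n, hn⟩ := hUx _ hmem
    have : (q:ℝ) < xs n x := by
      have h1 : 1 < (q:ℝ)⁻¹ * xs n x := by simpa using hn
      rw [lt_inv_mul_iff₀ hqpos, mul_one] at h1
      exact h1
    calc (q : ℝ≥0∞) = ENNReal.ofReal q := (ENNReal.ofReal_coe_nnreal).symm
    _ ≤ ENNReal.ofReal |xs n x| := ENNReal.ofReal_le_ofReal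
        (le_trans this.le (le_abs_self _))
    _ ≤ ⨆ n, ENNReal.ofReal |xs n x| := le_iSup (fun n => ENNReal.ofReal |xs n x|) n
  · -- sup ≤ N x
    refine iSup_le fun n => ?_
    rcases abs_cases (xs n x) with ⟨h, _⟩ | ⟨h, _⟩
    · rw [h]; exact hxsS n x
    · rw [h]
      have : ENNReal.ofReal (xs n (-x)) ≤ N (-x) := hxsS n (-x)
      simpa [hNneg] using this
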